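/- Let k ∈ ℕ and w ∈ Σ*, and suppose there is u ∈ A* with |u| = k such that u is a prefix of π(w) and a suffix of π̄(w). Then w is k-shuffled if and only if ow(w) ≥ k, where w is k-shuffled means: w contains at least k write symbols and at least k read symbols, and for each i = 1,…,k, the i-th write symbol of w occurs before the i-th of the last k read symbols of w. -/

import Mathlib

/-- A basic queue action: write a letter or read a letter. -/
inductive Act (A : Type) : Type
  | wr (a : A)
  | rd (a : A)
deriving DecidableEq

variable {A : Type} [DecidableEq A]

/-- The action of words over `Act A` on queue states `A* ∪ {⊥}` (⊥ = `none`). -/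
def act : Option (List A) → List (Act A) → Option (List A)
  | q, [] => q
  | none, _ :: _ => none
  | some q, (Act.wr a) :: u => act (some (q ++ [a])) u
  | some q, (Act.rd a) :: u =>
    match q with
    | [] => none
    | b :: q' => if b = a then act (some q') u else none

/-- Two words over `Act A` are equivalent if they act identically on all queues. -/
def qequiv (u v : List (Act A)) : Prop := ∀ q : List A, act (some q) u = act (some q) v

/-- Writing the word `w`. -/
def W (w : List A) : List (Act A) := w.map Act.wr

/-- Reading the word `w` (the barred copy of `w`). -/
def R (w : List A) : List (Act A) := w.map Act.rd

/-- `shuffle s` is the word `s₁ s̄₁ s₂ s̄₂ … sₖ s̄ₖ`. -/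
def shuffle (s : List A) : List (Act A) := s.flatMap fun a => [Act.wr a, Act.rd a]

/-- The projection to write letters. -/
def prW (w : List (Act A)) : List A :=
  w.filterMap fun x => match x with | Act.wr a => some a | Act.rd _ => none

/-- The projection to read letters (with the bars removed). -/
def prR (w : List (Act A)) : List A :=
  w.filterMap fun x => match x with | Act.wr _ => none | Act.rd a => some a

theorem act_append (u v : List (Act A)) : ∀ q, act q (u ++ v) = act (act q u) v := by
  induction u with
  | nil =>
      intro q
      cases q <;> rfl
  | cons x u ih =>
      intro q
      cases q with
      | none =>
          simp only [List.cons_append, act]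
          cases v with
          | nil => rfl
          | cons _ _ => rfl
      | some q =>
          cases x with
          | wr a => simpa [act] using ih _
          | rd a =>
              cases q with
              | nil =>
                  simp only [List.cons_append, act]
                  cases v with
                  | nil => rfl
                  | cons _ _ => rfl
              | cons b q' =>
                  by_cases h : b = a
                  · simp [List.cons_append, act, h, ih]
                  · simp only [List.cons_append, act, if_neg h]
                    cases v with
                    | nil => rfl
                    | cons _ _ => rfl

/-- The setoid of queue-action equivalence. -/
def qsetoid (A : Type) [DecidableEq A] : Setoid (List (Act A)) :=
  ⟨qequiv, ⟨fun _ _ => rfl, fun h q => (h q).symm, fun h1 h2 q => (h1 q).trans (h2 q)⟩⟩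

/-- The monoid of queue actions. -/
def QAct (A : Type) [DecidableEq A] : Type := Quotient (qsetoid A)

theorem act_none : ∀ v : List (Act A), act (none : Option (List A)) v = none
  | [] => rfl
  | _ :: _ => rfl

theorem qequiv_append {u u' v v' : List (Act A)} (hu : qequiv u u') (hv : qequiv v v') :
    qequiv (u ++ v) (u' ++ v') := by
  intro q
  rw [act_append, act_append, hu q]
  cases h : act (some q) u' with
  | none => rw [act_none, act_none]
  | some q' => exact hv q'

instance : Monoid (QAct A) where
  mul := Quotient.map₂ (· ++ ·) (fun _ _ hu _ _ hv => qequiv_append hu hv)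
  one := Quotient.mk (qsetoid A) []
  mul_assoc := by
    rintro ⟨u⟩ ⟨v⟩ ⟨w⟩
    exact congrArg (Quotient.mk (qsetoid A)) (List.append_assoc u v w)
  one_mul := by
    rintro ⟨u⟩
    rfl
  mul_one := by
    rintro ⟨u⟩
    exact congrArg (Quotient.mk (qsetoid A)) (List.append_nil u)

/-- The class of a word in the monoid of queue actions. -/
def cls (w : List (Act A)) : QAct A := Quotient.mk (qsetoid A) w

theorem cls_mul (u v : List (Act A)) : cls u * cls v = cls (u ++ v) := rfl

/-- `w` is `k`-shuffled: it has at least `k` write and `k` read symbols and, for each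
`i < k`, the `i`-th write symbol occurs before the `i`-th of the last `k` read symbols. -/
def kShuffled (k : ℕ) (w : List (Act A)) : Prop :=
  ∀ i < k, ∃ (x y z : List (Act A)) (a b : A),
    w = x ++ [Act.wr a] ++ y ++ [Act.rd b] ++ z ∧
    (prW x).length = i ∧ (prR z).length = k - 1 - i


/-! ### Auxiliary lemmas -/

section Aux
variable {A : Type} [DecidableEq A]

@[simp] theorem prW_nil : prW ([] : List (Act A)) = [] := rfl
@[simp] theorem prW_wr (a : A) (w : List (Act A)) : prW (Act.wr a :: w) = a :: prW w := rfl
@[simp] theorem prW_rd (a : A) (w : List (Act A)) : prW (Act.rd a :: w) = prW w := rfl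
@[simp] theorem prR_nil : prR ([] : List (Act A)) = [] := rfl
@[simp] theorem prR_wr (a : A) (w : List (Act A)) : prR (Act.wr a :: w) = prR w := rfl
@[simp] theorem prR_rd (a : A) (w : List (Act A)) : prR (Act.rd a :: w) = a :: prR w := rfl
@[simp] theorem prW_append (u v : List (Act A)) : prW (u ++ v) = prW u ++ prW v :=
  List.filterMap_append
@[simp] theorem prR_append (u v : List (Act A)) : prR (u ++ v) = prR u ++ prR v :=
  List.filterMap_append

theorem act_eq_some (w : List (Act A)) : ∀ q r, act (some q) w = some r →
    q ++ prW w = prR w ++ r := by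
  induction w with
  | nil =>
    intro q r h
    simp only [act] at h
    cases h
    simp
  | cons c w ih =>
    intro q r h
    cases c with
    | wr a =>
      simp only [act] at h
      have := ih _ _ h
      simp only [prW_wr, prR_wr]
      rw [← this]
      simp
    | rd a =>
      cases q with
      | nil => simp [act] at h
      | cons b q' =>
        simp only [act] at h
        by_cases hb : b = a
        · rw [if_pos hb] at h
          have := ih _ _ h
          subst hb
          simp only [prW_rd, prR_rd, List.cons_append, this]
        · rw [if_neg hb] at h
          exact absurd h (by simp)

theorem act_prR (w : List (Act A)) : ∀ t, act (some (prR w ++ t)) w = some (t ++ prW w) := by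
  induction w with
  | nil => intro t; simp [act]
  | cons c w ih =>
    intro t
    cases c with
    | wr a =>
      simp only [prR_wr, prW_wr, act]
      have := ih (t ++ [a])
      rw [show prR w ++ t ++ [a] = prR w ++ (t ++ [a]) by simp]
      rw [this]
      simp
    | rd a =>
      simp only [prR_rd, prW_rd, List.cons_append, act, if_pos rfl]
      exact ih t

theorem prefix_two {l s r₁ r₂ : List A} {c d : A} (hcd : c ≠ d)
    (h1 : l <+: s ++ c :: r₁) (h2 : l <+: s ++ d :: r₂) : l.length ≤ s.length := by
  by_contra h
  push_neg at h
  have hc : l[s.length]'h = c := by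
    have := h1.getElem (i := s.length) h
    rw [List.getElem_append_right (le_refl _)] at this
    simpa using this
  have hd : l[s.length]'h = d := by
    have := h2.getElem (i := s.length) h
    rw [List.getElem_append_right (le_refl _)] at this
    simpa using this
  exact hcd (hc.symm.trans hd)

theorem qequiv_proj {w w' : List (Act A)} [Nontrivial A] (h : qequiv w w') :
    prR w = prR w' ∧ prW w = prW w' := by
  obtain ⟨c, d, hcd⟩ := exists_pair_ne A
  have key : ∀ t : List A, (prR w ++ t) ++ prW w' = prR w' ++ (t ++ prW w) := by
    intro t
    have h1 := act_prR w t
    rw [h (prR w ++ t)] at h1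
    exact act_eq_some w' _ _ h1
  have p1 : prR w' <+: prR w ++ c :: prW w' := by
    refine ⟨c :: prW w, ?_⟩
    have := (key [c]).symm
    simpa using this
  have p2 : prR w' <+: prR w ++ d :: prW w' := by
    refine ⟨d :: prW w, ?_⟩
    have := (key [d]).symm
    simpa using this
  have q1 : prR w <+: prR w' ++ c :: prW w := by
    refine ⟨c :: prW w', ?_⟩
    have := key [c]
    simpa using this
  have q2 : prR w <+: prR w' ++ d :: prW w := by
    refine ⟨d :: prW w', ?_⟩
    have := key [d]
    simpa using this
  have hle1 : (prR w').length ≤ (prR w).length := prefix_two hcd p1 p2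
  have hle2 : (prR w).length ≤ (prR w').length := prefix_two hcd q1 q2
  have hlen : (prR w).length = (prR w').length := le_antisymm hle2 hle1
  have := key []
  simp only [List.append_nil, List.nil_append] at this
  obtain ⟨e1, e2⟩ := List.append_inj this hlen
  exact ⟨e1, e2.symm⟩

theorem succ_iff (w : List (Act A)) : ∀ q, (act (some q) w ≠ none) ↔
    ∀ p b s, w = p ++ Act.rd b :: s → prR p ++ [b] <+: q ++ prW p := by
  induction w with
  | nil =>
    intro q
    constructor
    · intro _ p b s hw
      exact absurd hw.symm (by simp)
    · intro _
      simp [act]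
  | cons cc w ih =>
    intro q
    cases cc with
    | wr a =>
      rw [show act (some q) (Act.wr a :: w) = act (some (q ++ [a])) w from rfl, ih]
      constructor
      · intro H p b s hw
        cases p with
        | nil =>
          injection hw with h1 h2
          cases h1
        | cons e p' =>
          injection hw with h1 h2
          subst h1
          have := H p' b s h2
          simp only [prR_wr, prW_wr]
          rwa [show q ++ a :: prW p' = (q ++ [a]) ++ prW p' by simp]
      · intro H p b s hw
        have := H (Act.wr a :: p) b s (by rw [hw]; rfl)
        simp only [prR_wr, prW_wr] at this
        rwa [show q ++ a :: prW p = (q ++ [a]) ++ prW p by simp] at this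
    | rd a =>
      cases q with
      | nil =>
        constructor
        · intro H
          exact absurd rfl H
        · intro H
          have := H [] a w rfl
          simp at this
      | cons e q'
      =>
        by_cases he : e = a
        · subst he
          rw [show act (some (e :: q')) (Act.rd e :: w) = act (some q') w from by
            simp [act], ih]
          constructor
          · intro H p b s hw
            cases p with
            | nil =>
              injection hw with h1 h2
              injection h1 with h1
              subst h1 h2
              simp
            | cons f p' =>
              injection hw with h1 h2
              subst h1
              have := H p' b s h2
              simp only [prR_rd, prW_rd, List.cons_append, List.cons_prefix_cons]
              exact ⟨by simp, this⟩
          · intro H p b s hw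
            have := H (Act.rd e :: p) b s (by rw [hw]; rfl)
            simp only [prR_rd, prW_rd, List.cons_append, List.cons_prefix_cons] at this
            exact this.2
        · have hact : act (some (e :: q')) (Act.rd a :: w) = none := by
            simp [act, he]
          rw [hact]
          constructor
          · intro H
            exact absurd rfl H
          · intro H
            have := H [] a w rfl
            simp only [prR_nil, prW_nil, List.nil_append, List.append_nil,
              List.cons_prefix_cons] at this
            exact absurd this.1.symm he

theorem exists_read_split (w : List (Act A)) : ∀ j, j < (prR w).length →
    ∃ p b s, w = p ++ Act.rd b :: s ∧ (prR p).length = j := by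
  induction w with
  | nil => intro j h; simp at h
  | cons e w ih =>
    cases e with
    | wr a =>
      intro j h
      obtain ⟨p, b, s, hw, hp⟩ := ih j (by simpa using h)
      exact ⟨Act.wr a :: p, b, s, by rw [hw]; rfl, by simpa using hp⟩
    | rd a =>
      intro j h
      cases j with
      | zero => exact ⟨[], a, w, rfl, rfl⟩
      | succ j =>
        obtain ⟨p, b, s, hw, hp⟩ := ih j (by simp at h; omega)
        exact ⟨Act.rd a :: p, b, s, by rw [hw]; rfl, by simp [hp]⟩

theorem exists_write_split (p : List (Act A)) : ∀ i, i < (prW p).length →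
    ∃ X a Y, p = X ++ Act.wr a :: Y ∧ (prW X).length = i := by
  induction p with
  | nil => intro i h; simp at h
  | cons e w ih =>
    cases e with
    | rd a =>
      intro i h
      obtain ⟨X, b, Y, hw, hX⟩ := ih i (by simpa using h)
      exact ⟨Act.rd a :: X, b, Y, by rw [hw]; rfl, by simpa using hX⟩
    | wr a =>
      intro i h
      cases i with
      | zero => exact ⟨[], a, w, rfl, rfl⟩
      | succ i =>
        obtain ⟨X, b, Y, hw, hX⟩ := ih i (by simp at h; omega)
        exact ⟨Act.wr a :: X, b, Y, by rw [hw]; rfl, by simp [hX]⟩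

theorem read_split_unique : ∀ (p : List (Act A)) (b : A) (s p' : List (Act A)) (b' : A)
    (s' : List (Act A)), p ++ Act.rd b :: s = p' ++ Act.rd b' :: s' →
    (prR p).length = (prR p').length → p = p' ∧ b = b' ∧ s = s' := by
  intro p
  induction p with
  | nil =>
    intro b s p' b' s' he hl
    cases p' with
    | nil =>
      injection he with h1 h2
      injection h1 with h1
      exact ⟨rfl, h1, h2⟩
    | cons e t =>
      injection he with h1 h2
      rw [← h1] at hl
      simp at hl
  | cons e p ih =>
    intro b s p' b' s' he hl
    cases p' with
    | nil =>
      injection he with h1 h2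
      rw [h1] at hl
      simp at hl
    | cons e' t =>
      injection he with h1 h2
      subst h1
      have hl' : (prR p).length = (prR t).length := by
        cases e with
        | wr a => simpa using hl
        | rd a => simpa using hl
      obtain ⟨h3, h4, h5⟩ := ih b s t b' s' h2 hl'
      exact ⟨by rw [h3], h4, h5⟩

theorem kShuffled_iff_act (k : ℕ) (w : List (Act A)) (u : List A) (hlen : u.length = k)
    (hpre : u <+: prW w) (hsuf : u <:+ prR w) :
    kShuffled k w ↔ act (some ((prR w).take ((prR w).length - k))) w ≠ none := by
  set m := (prR w).length with hm
  have hk : k ≤ m := hlen ▸ hsuf.length_le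
  have hu : (prR w).drop (m - k) = u := by
    obtain ⟨t, ht⟩ := hsuf
    have htl : t.length = m - k := by
      have := congrArg List.length ht
      simp [← hm] at this
      omega
    rw [← ht, List.drop_left' htl]
  rw [succ_iff]
  constructor
  · intro H p b s hw
    have hsplit : prR w = (prR p ++ [b]) ++ prR s := by rw [hw]; simp
    have hj : (prR p).length + 1 + (prR s).length = m := by
      rw [hm, hsplit]; simp; omega
    set j := (prR p).length with hjd
    have htake : (prR w).take (j + 1) = prR p ++ [b] := by
      rw [hsplit]
      exact List.take_left' (by simp; omega)
    by_cases hcase : j + 1 ≤ m - k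
    · have hpr : prR p ++ [b] <+: (prR w).take (m - k) := by
        rw [← htake, ← min_eq_left hcase, ← List.take_take]
        exact List.take_prefix _ _
      exact hpr.trans (List.prefix_append _ _)
    · have hmk : m - k ≤ j := by omega
      set i := j - (m - k) with hidef
      have hik : i < k := by omega
      obtain ⟨X, Y, Z, a, b', hw2, hWX, hRZ⟩ := H i hik
      have hw2' : w = (X ++ Act.wr a :: Y) ++ Act.rd b' :: Z := by rw [hw2]; simp
      have hsp : prR w = (prR X ++ prR Y) ++ b' :: prR Z := by rw [hw2']; simp
      have hml := congrArg List.length hsp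
      rw [← hm] at hml
      simp only [List.length_append, List.length_cons] at hml
      have hlen2 : (prR (X ++ Act.wr a :: Y)).length = j := by
        simp only [prR_append, prR_wr, List.length_append]
        omega
      obtain ⟨hp, hb, hs⟩ := read_split_unique p b s _ b' Z (hw.symm.trans hw2')
        (by rw [hlen2])
      have hWp : i + 1 ≤ (prW p).length := by
        rw [hp]
        simp [hWX]
      have hjj : j + 1 = (m - k) + (i + 1) := by omega
      have hdecomp : (prR w).take (j + 1) = (prR w).take (m - k) ++ u.take (i + 1) := by
        rw [hjj, List.take_add, hu]
      obtain ⟨t1, ht1⟩ := hpre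
      have hWw : prW w = prW p ++ prW (Act.rd b :: s) := by rw [hw]; simp
      have hup : u.take (i + 1) = (prW p).take (i + 1) := by
        have e1 : u.take (i + 1) = (prW w).take (i + 1) := by
          rw [← ht1, List.take_append_of_le_length (by omega)]
        rw [e1, hWw, List.take_append_of_le_length hWp]
      have heq : prR p ++ [b] = (prR w).take (m - k) ++ u.take (i + 1) := by
        rw [← htake, hdecomp]
      rw [heq]
      rw [List.prefix_append_right_inj]
      rw [hup]
      exact List.take_prefix _ _
  · intro H i hik
    have hjm : m - k + i < m := by omega
    obtain ⟨p, b, s, hw, hj⟩ := exists_read_split w (m - k + i) hjm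
    have h1 := H p b s hw
    have hq0len : ((prR w).take (m - k)).length = m - k := by
      rw [List.length_take, ← hm]
      omega
    have hlenp : i + 1 ≤ (prW p).length := by
      have hh := h1.length_le
      simp only [List.length_append, hq0len, List.length_cons] at hh
      simp at hh
      omega
    obtain ⟨X, a, Y, hp, hX⟩ := exists_write_split p i (by omega)
    refine ⟨X, Y, s, a, b, ?_, hX, ?_⟩
    · rw [hw, hp]; simp
    · have hsp : prR w = prR p ++ b :: prR s := by rw [hw]; simp
      have hml := congrArg List.length hsp
      simp [← hm] at hml
      omega

@[simp] theorem prW_R (x : List A) : prW (R x) = [] := by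
  induction x with
  | nil => rfl
  | cons a x ih => simpa [R] using ih

@[simp] theorem prR_R (x : List A) : prR (R x) = x := by
  induction x with
  | nil => rfl
  | cons a x ih => simpa [R] using ih

@[simp] theorem prW_W (x : List A) : prW (W x) = x := by
  induction x with
  | nil => rfl
  | cons a x ih => simpa [W] using ih

@[simp] theorem prR_W (x : List A) : prR (W x) = [] := by
  induction x with
  | nil => rfl
  | cons a x ih => simpa [W] using ih

@[simp] theorem shuffle_nil : shuffle ([] : List A) = [] := rfl
@[simp] theorem shuffle_cons (a : A) (y : List A) :
    shuffle (a :: y) = Act.wr a :: Act.rd a :: shuffle y := rfl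

@[simp] theorem prW_shuffle (y : List A) : prW (shuffle y) = y := by
  induction y with
  | nil => rfl
  | cons a y ih => simp [ih]

@[simp] theorem prR_shuffle (y : List A) : prR (shuffle y) = y := by
  induction y with
  | nil => rfl
  | cons a y ih => simp [ih]

theorem act_W_eval (z : List A) : ∀ q, act (some q) (W z) = some (q ++ z) := by
  induction z with
  | nil => intro q; simp [W, act]
  | cons a z ih =>
    intro q
    rw [show act (some q) (W (a :: z)) = act (some (q ++ [a])) (W z) from rfl, ih]
    simp

theorem act_R_eval (x : List A) : ∀ t, act (some (x ++ t)) (R x) = some t := by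
  induction x with
  | nil => intro t; simp [R, act]
  | cons a x ih =>
    intro t
    rw [show act (some ((a :: x) ++ t)) (R (a :: x)) =
      act (some (x ++ t)) (R x) from by simp [R, act]]
    exact ih t

theorem act_R_fail (x : List A) : ∀ n, n < x.length → act (some (x.take n)) (R x) = none := by
  induction x with
  | nil => intro n h; simp at h
  | cons a x ih =>
    intro n h
    cases n with
    | zero => simp [R, act]
    | succ n =>
      rw [show act (some ((a :: x).take (n + 1))) (R (a :: x)) =
        act (some (x.take n)) (R x) from by simp [R, act]]
      exact ih n (by simp at h; omega)

theorem act_shuffle (y : List A) : ∀ q, (∀ i, i < y.length → (q ++ y)[i]? = y[i]?) →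
    ∃ r, act (some q) (shuffle y) = some r := by
  induction y with
  | nil => intro q _; exact ⟨q, rfl⟩
  | cons a y ih =>
    intro q hcond
    cases q with
    | nil =>
      have h2 : act (some []) [Act.wr a, Act.rd a] = some [] := by simp [act]
      have step : act (some []) (shuffle (a :: y)) = act (some []) (shuffle y) := by
        rw [show shuffle (a :: y) = [Act.wr a, Act.rd a] ++ shuffle y from rfl, act_append, h2]
      rw [step]
      exact ih [] (by simp)
    | cons c q' =>
      have hca : c = a := by
        have := hcond 0 (by simp)
        simpa using this
      subst hca
      have h2 : act (some (c :: q')) [Act.wr c, Act.rd c] = some (q' ++ [c]) := by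
        simp [act]
      have step : act (some (c :: q')) (shuffle (c :: y)) =
          act (some (q' ++ [c])) (shuffle y) := by
        rw [show shuffle (c :: y) = [Act.wr c, Act.rd c] ++ shuffle y from rfl, act_append, h2]
      rw [step]
      refine ih (q' ++ [c]) ?_
      intro i hi
      have := hcond (i + 1) (by simp; omega)
      rw [show (c :: q' ++ c :: y)[i + 1]? = (q' ++ c :: y)[i]? from by
        simp] at this
      rw [show (q' ++ [c] ++ y)[i]? = (q' ++ c :: y)[i]? from by simp]
      rw [this]
      simp

end Aux

/-- If `u` of length `k` is a prefix of `π(w)` and a suffix of `π̄(w)`, then `w` is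
`k`-shuffled iff the overlap width of `w` is at least `k` (where the normal form of `w`
is `x̄ · shuffle(y,ȳ) · z`, so `ow(w) = |y|`). -/
theorem stmt19 [Fintype A] [Nontrivial A] (k : ℕ) (w : List (Act A)) (u : List A)
    (hlen : u.length = k) (hpre : u <+: prW w) (hsuf : u <:+ prR w)
    (x y z : List A) (hnf : qequiv w (R x ++ shuffle y ++ W z)) :
    kShuffled k w ↔ k ≤ y.length := by
  obtain ⟨hR, hW⟩ := qequiv_proj hnf
  have hRw : prR w = x ++ y := by rw [hR]; simp
  have hWw : prW w = y ++ z := by rw [hW]; simp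
  have hm : (prR w).length = x.length + y.length := by rw [hRw]; simp
  have hk : k ≤ (prR w).length := hlen ▸ hsuf.length_le
  rw [kShuffled_iff_act k w u hlen hpre hsuf, hnf ((prR w).take ((prR w).length - k))]
  constructor
  · intro H
    by_contra hky
    push_neg at hky
    apply H
    have hq : (prR w).take ((prR w).length - k) = x.take ((prR w).length - k) := by
      rw [hm]
      conv_lhs => rw [hRw]
      exact List.take_append_of_le_length (by omega)
    rw [hq, act_append, act_append, act_R_fail x ((prR w).length - k) (by omega), act_none, act_none]
  · intro hky
    have hn : (prR w).length - k = x.length + (y.length - k) := by omega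
    have hq : (prR w).take ((prR w).length - k) = x ++ y.take (y.length - k) := by
      rw [hn]
      conv_lhs => rw [hRw]
      exact List.take_length_add_append _
    have hu_take : u = y.take k := by
      obtain ⟨t, ht⟩ := hpre
      have h1 : (prW w).take k = u := by rw [← ht, List.take_left' hlen]
      rw [← h1, hWw, List.take_append_of_le_length hky]
    have hu_drop : u = y.drop (y.length - k) := by
      obtain ⟨t, ht⟩ := hsuf
      have htl : t.length = (prR w).length - k := by
        have := congrArg List.length ht
        simp at this
        omega
      have h1 : (prR w).drop ((prR w).length - k) = u := by
        rw [← htl, ← ht, List.drop_left]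
      rw [← h1, hn]
      conv_lhs => rw [hRw]
      exact List.drop_length_add_append _
    have hper : y.take k = y.drop (y.length - k) := by
      rw [← hu_take]; exact hu_drop
    have hln : (y.take (y.length - k)).length = y.length - k := by
      rw [List.length_take]; omega
    have hcond : ∀ i, i < y.length → (y.take (y.length - k) ++ y)[i]? = y[i]? := by
      intro i hi
      by_cases hin : i < y.length - k
      · rw [List.getElem?_append_left (by rw [hln]; exact hin)]
        simp [List.getElem?_take, hin]
      · rw [List.getElem?_append_right (by rw [hln]; omega), hln]
        have h2 : y[i - (y.length - k)]? = (y.take k)[i - (y.length - k)]? := by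
          rw [List.getElem?_take]
          simp [show i - (y.length - k) < k by omega]
        rw [h2, hper, List.getElem?_drop]
        congr 1
        omega
    obtain ⟨r, hr⟩ := act_shuffle y (y.take (y.length - k)) hcond
    rw [hq, act_append, act_append, act_R_eval x (y.take (y.length - k)), hr, act_W_eval]
    simp
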